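/- Every abelian subgroup S of the normalizer N = T ∪ Tσ of the diagonal torus T in SL₂(F) that is not contained in T satisfies S ∩ T ⊆ {1, -1}, and moreover S ⊆ {1, -1, tσ, -tσ} for some t ∈ T. -/

import Mathlib

open Matrix

/-- The matrix σ = [[0,1],[-1,0]] as an element of SL₂(F). -/
def sigmaSL (F : Type*) [Field F] : Matrix.SpecialLinearGroup (Fin 2) F :=
  ⟨!![0, 1; -1, 0], by simp [Matrix.det_fin_two_of]⟩

/-- The diagonal matrix diag(λ, λ⁻¹) as an element of SL₂(F). -/
def torusSL (F : Type*) [Field F] (l : Fˣ) : Matrix.SpecialLinearGroup (Fin 2) F :=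
  ⟨!![(l : F), 0; 0, ((l⁻¹ : Fˣ) : F)], by simp [Matrix.det_fin_two_of]⟩

/-- The diagonal torus T of SL₂(F), as a set. -/
def torusSet (F : Type*) [Field F] : Set (Matrix.SpecialLinearGroup (Fin 2) F) :=
  {g | ∃ l : Fˣ, g = torusSL F l}

/-- The set N = T ∪ Tσ, the normalizer of the diagonal torus in SL₂(F). -/
def normSet (F : Type*) [Field F] : Set (Matrix.SpecialLinearGroup (Fin 2) F) :=
  torusSet F ∪ ((fun t => t * sigmaSL F) '' torusSet F)

instance : Fact (Even (Fintype.card (Fin 2))) := ⟨by simp⟩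

section Helpers

variable {F : Type*} [Field F]

lemma torus_mul (a b : Fˣ) : torusSL F a * torusSL F b = torusSL F (a * b) := by
  apply Subtype.ext
  rw [Matrix.SpecialLinearGroup.coe_mul]
  simp [torusSL, Matrix.SpecialLinearGroup.coe_mul, Matrix.mul_fin_two, mul_comm]

lemma torus_one : torusSL F 1 = 1 := by
  apply Subtype.ext
  simp [torusSL]
  ext i j; fin_cases i <;> fin_cases j <;> simp

lemma torus_neg_one : torusSL F (-1) = -1 := by
  apply Subtype.ext
  simp [torusSL]
  ext i j; fin_cases i <;> fin_cases j <;> simp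

lemma torus_inj {a b : Fˣ} (h : torusSL F a = torusSL F b) : a = b := by
  have := congrArg (fun g : Matrix.SpecialLinearGroup (Fin 2) F => g.1 0 0) h
  simpa [torusSL] using Units.ext this

lemma sigma_torus (l : Fˣ) : sigmaSL F * torusSL F l = torusSL F l⁻¹ * sigmaSL F := by
  apply Subtype.ext
  rw [Matrix.SpecialLinearGroup.coe_mul, Matrix.SpecialLinearGroup.coe_mul]
  simp [torusSL, sigmaSL, Matrix.SpecialLinearGroup.coe_mul, Matrix.mul_fin_two]

lemma units_sq {l : Fˣ} (h : l * l = 1) : l = 1 ∨ l = -1 := by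
  have : (l : F) * (l : F) = 1 := by
    have h' : ((l * l : Fˣ) : F) = 1 := by rw [h]; simp
    rwa [Units.val_mul] at h'
  rcases mul_self_eq_one_iff.mp this with h1 | h1
  · left; exact Units.ext h1
  · right; exact Units.ext (by simpa using h1)

end Helpers

/-- An abelian subgroup S of N = T ∪ Tσ not contained in T satisfies S ∩ T ⊆ {1,-1},
and S ⊆ {1, -1, tσ, -tσ} for some t ∈ T. -/
theorem abelian_subgroup_of_normalizer {F : Type*} [Field F] [IsAlgClosed F] [CharZero F]
    (S : Subgroup (Matrix.SpecialLinearGroup (Fin 2) F))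
    (habelian : ∀ a ∈ S, ∀ b ∈ S, a * b = b * a)
    (hsub : (S : Set (Matrix.SpecialLinearGroup (Fin 2) F)) ⊆ normSet F)
    (hnot : ¬ (S : Set (Matrix.SpecialLinearGroup (Fin 2) F)) ⊆ torusSet F) :
    (S : Set (Matrix.SpecialLinearGroup (Fin 2) F)) ∩ torusSet F ⊆ {1, -1} ∧
    ∃ t ∈ torusSet F, (S : Set (Matrix.SpecialLinearGroup (Fin 2) F)) ⊆
      {1, -1, t * sigmaSL F, -(t * sigmaSL F)} := by
  obtain ⟨s, hsS, hsT⟩ := Set.not_subset.mp hnot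
  obtain h | ⟨t0, ht0, hs⟩ := hsub hsS
  · exact absurd h hsT
  obtain ⟨l0, rfl⟩ := ht0
  simp only at hs
  -- hs : torusSL F l0 * sigmaSL F = s
  have key : ∀ x ∈ S, x ∈ torusSet F → x = 1 ∨ x = -1 := by
    intro x hxS hxT
    obtain ⟨l, rfl⟩ := hxT
    have hc := habelian _ hxS _ hsS
    rw [← hs] at hc
    have e1 : torusSL F (l * l0) * sigmaSL F = torusSL F l * (torusSL F l0 * sigmaSL F) := by
      rw [← mul_assoc, torus_mul]
    have e2 : torusSL F (l0 * l⁻¹) * sigmaSL F = torusSL F l0 * sigmaSL F * torusSL F l := by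
      rw [← torus_mul, mul_assoc, ← sigma_torus, ← mul_assoc]
    have hc2 := e1.trans (hc.trans e2.symm)
    have hl := torus_inj (mul_right_cancel hc2)
    have hll : l * l = 1 := by
      have h2 : l * (l * l0) = l * (l0 * l⁻¹) := by rw [hl]
      rw [mul_comm l0 l⁻¹, ← mul_assoc, ← mul_assoc] at h2
      have h3 := mul_right_cancel h2
      simpa using h3
    rcases units_sq hll with h1 | h1
    · left; rw [h1, torus_one]
    · right; rw [h1, torus_neg_one]
  constructor
  · rintro x ⟨hxS, hxT⟩
    rcases key x hxS hxT with h1 | h1 <;> simp [h1]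
  · refine ⟨torusSL F l0, ⟨l0, rfl⟩, ?_⟩
    intro x hxS
    obtain hT | ⟨t1, ⟨l1, rfl⟩, hx⟩ := hsub hxS
    · rcases key x hxS hT with h1 | h1 <;> simp [h1]
    · simp only at hx
      -- hx : torusSL F l1 * sigmaSL F = x
      have hy : torusSL F (l1 * l0⁻¹) * s = x := by
        rw [← hs, ← mul_assoc, torus_mul, inv_mul_cancel_right, hx]
      have hyS : torusSL F (l1 * l0⁻¹) ∈ S := by
        have : torusSL F (l1 * l0⁻¹) = x * s⁻¹ := by rw [← hy, mul_inv_cancel_right]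
        rw [this]; exact S.mul_mem hxS (S.inv_mem hsS)
      rcases key _ hyS ⟨_, rfl⟩ with h1 | h1
      · rw [h1, one_mul] at hy
        rw [← hy, ← hs]
        simp
      · rw [h1] at hy
        rw [← hy, ← hs]
        simp
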